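/- For gradient descent x_{t+1} = x_t − η ℓ'(x_t y_t) y_t, y_{t+1} = y_t − η ℓ'(x_t y_t) x_t with ℓ convex, even, |ℓ'(s)| ≤ |s|, suppose at iteration 𝔱 we have y_{𝔱+1}² < 2/η ≤ y_𝔱². Then y_{𝔱+1}² ≥ 2/η − 2η (x_𝔱 y_𝔱)². -/
import Mathlib

/-- If at the crossing iteration `𝔱` we have `y_{𝔱+1}² < 2/η ≤ y_𝔱²`, then
`y_{𝔱+1}² ≥ 2/η − 2η(x_𝔱 y_𝔱)²`. -/
theorem initial_gap_at_crossing
    (ℓ : ℝ → ℝ)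
    (hconv : ConvexOn ℝ Set.univ ℓ)
    (heven : ∀ s, ℓ (-s) = ℓ s)
    (hbound : ∀ s, |deriv ℓ s| ≤ |s|)
    (η x y : ℝ) (hη : 0 < η)
    (hcross : (y - η * deriv ℓ (x * y) * x) ^ 2 < 2 / η ∧ 2 / η ≤ y ^ 2) :
    (y - η * deriv ℓ (x * y) * x) ^ 2 ≥ 2 / η - 2 * η * (x * y) ^ 2 := by
  obtain ⟨h1, h2⟩ := hcross
  have hb := hbound (x * y)
  have hkey : deriv ℓ (x * y) * (x * y) ≤ (x * y) ^ 2 := by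
    calc deriv ℓ (x * y) * (x * y) ≤ |deriv ℓ (x * y) * (x * y)| := le_abs_self _
      _ = |deriv ℓ (x * y)| * |x * y| := abs_mul _ _
      _ ≤ |x * y| * |x * y| := by
          exact mul_le_mul_of_nonneg_right hb (abs_nonneg _)
      _ = (x * y) ^ 2 := by rw [← abs_mul, abs_mul_self]; ring
  nlinarith [sq_nonneg (η * deriv ℓ (x * y) * x), hη.le]
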